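/- Let M be a strongly base orderable matroid, ψ: E(M) → Γ a group labeling, and F ⊆ Γ a finite set of forbidden labels. If M has at least one F-avoiding basis, then for each basis B there exists an F-avoiding basis B* with |B \ B*| ≤ |F|. -/

import Mathlib

/-- If `M` is strongly base orderable and an `F`-avoiding basis exists,
then for each basis `B` there is an `F`-avoiding basis `B*` with `|B \ B*| ≤ |F|`. -/
theorem stmt_9 {α Γ : Type*} [AddCommGroup Γ] (M : Matroid α) [M.Finite]
    (hsbo : ∀ B₁ B₂, M.IsBase B₁ → M.IsBase B₂ → ∃ φ : α → α,
      Set.BijOn φ (B₁ \ B₂) (B₂ \ B₁) ∧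
      ∀ Z ⊆ B₁ \ B₂, M.IsBase ((B₁ \ Z) ∪ φ '' Z))
    (ψ : α → Γ) (F : Finset Γ)
    (hex : ∃ B', M.IsBase B' ∧ (∑ᶠ e ∈ B', ψ e) ∉ F)
    (B : Set α) (hB : M.IsBase B) :
    ∃ Bstar, M.IsBase Bstar ∧ (∑ᶠ e ∈ Bstar, ψ e) ∉ F ∧
      (B \ Bstar).ncard ≤ F.card := by
  classical
  have hPex : ∃ n : ℕ, ∃ B', M.IsBase B' ∧ (∑ᶠ e ∈ B', ψ e) ∉ F ∧ (B \ B').ncard = n := by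
    obtain ⟨B', h1, h2⟩ := hex; exact ⟨_, B', h1, h2, rfl⟩
  set n := Nat.find hPex with hn_def
  obtain ⟨B', hB', hψB', hn⟩ := Nat.find_spec hPex
  rcases le_or_gt n F.card with hle | hlt
  · exact ⟨B', hB', hψB', hn ▸ hle⟩
  exfalso
  obtain ⟨φ, hbij, hbase⟩ := hsbo B' B hB' hB
  have hE : M.E.Finite := M.ground_finite
  have hfB : B.Finite := hE.subset hB.subset_ground
  have hfB' : B'.Finite := hE.subset hB'.subset_ground
  have hD : (B' \ B).Finite := hfB'.diff (t := B)
  have hD2 : (B \ B').Finite := hfB.diff (t := B')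
  have hTn : (B' \ B).ncard = n := by rw [hB'.ncard_diff_comm hB, hn]
  -- enumerate B' \ B as a list
  set T : Finset α := hD.toFinset with hT_def
  have hTcard : T.card = n := by
    rw [← hTn, Set.ncard_eq_toFinset_card _ hD]
  set L : List α := T.toList with hL_def
  have hLnd : L.Nodup := T.nodup_toList
  have hLlen : L.length = n := by rw [hL_def, Finset.length_toList, hTcard]
  set Zs : ℕ → Set α := fun i => {x | x ∈ L.take i} with hZs_def
  have hZsub : ∀ i, Zs i ⊆ B' \ B := by
    intro i x hx
    have hxL : x ∈ L := List.take_subset i L hx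
    exact hD.mem_toFinset.mp (Finset.mem_toList.mp hxL)
  have hZfin : ∀ i, (Zs i).Finite := fun i => hD.subset (hZsub i)
  have hmono : ∀ i j, i ≤ j → Zs i ⊆ Zs j := by
    intro i j hij x hx
    have h1 : (L.take j).take i = L.take i := by
      rw [List.take_take, Nat.min_eq_left hij]
    have : x ∈ (L.take j).take i := h1 ▸ hx
    exact List.take_subset _ _ this
  have hcard : ∀ i ≤ n, (Zs i).ncard = i := by
    intro i hi
    have h1 : Zs i = ((L.take i).toFinset : Set α) := by
      ext x; simp [hZs_def]
    rw [h1, Set.ncard_coe_finset, List.toFinset_card_of_nodup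
      ((List.take_sublist i L).nodup hLnd), List.length_take, hLlen,
      Nat.min_eq_left hi]
  -- sum formula for swapped bases
  have hsum : ∀ Z, Z ⊆ B' \ B →
      (∑ᶠ e ∈ (B' \ Z) ∪ φ '' Z, ψ e) + ∑ᶠ z ∈ Z, ψ z
        = (∑ᶠ e ∈ B', ψ e) + ∑ᶠ z ∈ Z, ψ (φ z) := by
    intro Z hZ
    have hZfinite : Z.Finite := hD.subset hZ
    have hZB' : Z ⊆ B' := fun x hx => (hZ hx).1
    have himg : φ '' Z ⊆ B \ B' := by
      rw [← hbij.image_eq]; exact Set.image_mono (f := φ) hZ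
    have hdisj : Disjoint (B' \ Z) (φ '' Z) := by
      refine Set.disjoint_left.mpr fun x hx hx' => (himg hx').2 hx.1
    have h1 : ∑ᶠ e ∈ (B' \ Z) ∪ φ '' Z, ψ e
        = (∑ᶠ e ∈ B' \ Z, ψ e) + ∑ᶠ e ∈ φ '' Z, ψ e :=
      finsum_mem_union hdisj (hfB'.diff (t := Z)) (hZfinite.image φ)
    have h2 : ∑ᶠ e ∈ φ '' Z, ψ e = ∑ᶠ z ∈ Z, ψ (φ z) :=
      finsum_mem_image (hbij.injOn.mono hZ)
    have h3 : (∑ᶠ e ∈ B' \ Z, ψ e) + ∑ᶠ z ∈ Z, ψ z = ∑ᶠ e ∈ B', ψ e := by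
      rw [← finsum_mem_union (Set.disjoint_sdiff_left) (hfB'.diff (t := Z)) hZfinite,
        Set.diff_union_of_subset hZB']
    calc (∑ᶠ e ∈ (B' \ Z) ∪ φ '' Z, ψ e) + ∑ᶠ z ∈ Z, ψ z
        = ((∑ᶠ e ∈ B' \ Z, ψ e) + ∑ᶠ z ∈ Z, ψ z) + ∑ᶠ z ∈ Z, ψ (φ z) := by
          rw [h1, h2]; abel
      _ = (∑ᶠ e ∈ B', ψ e) + ∑ᶠ z ∈ Z, ψ (φ z) := by rw [h3]
  -- distance formula for swapped bases
  have hcd : ∀ Z, Z ⊆ B' \ B →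
      (B \ ((B' \ Z) ∪ φ '' Z)).ncard = n - Z.ncard := by
    intro Z hZ
    have hZfinite : Z.Finite := hD.subset hZ
    have himg : φ '' Z ⊆ B \ B' := by
      rw [← hbij.image_eq]; exact Set.image_mono (f := φ) hZ
    have hset : B \ ((B' \ Z) ∪ φ '' Z) = (B \ B') \ (φ '' Z) := by
      ext x
      simp only [Set.mem_diff, Set.mem_union, not_or, Set.mem_diff]
      constructor
      · rintro ⟨hxB, h1, h2⟩
        refine ⟨⟨hxB, fun hxB' => h1 ⟨hxB', fun hxZ => (hZ hxZ).2 hxB⟩⟩, h2⟩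
      · rintro ⟨⟨hxB, hxB'⟩, h2⟩
        exact ⟨hxB, fun h => hxB' h.1, h2⟩
    rw [hset, Set.ncard_diff himg (hZfinite.image φ), hn,
      Set.ncard_image_of_injOn (hbij.injOn.mono hZ)]
  -- minimality: every swapped basis by a nonempty Z has sum in F
  have hmem : ∀ Z, Z ⊆ B' \ B → Z.Nonempty →
      (∑ᶠ e ∈ (B' \ Z) ∪ φ '' Z, ψ e) ∈ F := by
    intro Z hZ hne
    by_contra hnot
    have hZfinite : Z.Finite := hD.subset hZ
    have hZpos : 0 < Z.ncard := (Set.ncard_pos hZfinite).mpr hne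
    have hZle : Z.ncard ≤ n := by
      rw [← hTn]; exact Set.ncard_le_ncard hZ hD
    have hfind : n ≤ n - Z.ncard :=
      Nat.find_min' hPex ⟨_, hbase Z hZ, hnot, hcd Z hZ⟩
    omega
  -- pigeonhole on the chain Zs 1, ..., Zs n
  have hnpos : 0 < n := lt_of_le_of_lt (Nat.zero_le _) hlt
  have hmapsto : ∀ i ∈ Finset.range n,
      (∑ᶠ e ∈ (B' \ Zs (i+1)) ∪ φ '' Zs (i+1), ψ e) ∈ F := by
    intro i hi
    rw [Finset.mem_range] at hi
    refine hmem _ (hZsub _) ?_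
    rw [← Set.ncard_pos (hZfin _), hcard (i+1) (by omega)]
    omega
  obtain ⟨a, ha, b, hb, hab, heq⟩ :=
    Finset.exists_ne_map_eq_of_card_lt_of_maps_to
      (by rwa [Finset.card_range]) hmapsto
  rw [Finset.mem_range] at ha hb
  -- wlog a < b
  wlog hab' : a < b generalizing a b
  · exact this b hb a ha hab.symm heq.symm (by omega)
  set i := a + 1
  set j := b + 1
  have hij : i < j := by omega
  have hjn : j ≤ n := by omega
  set W : Set α := Zs j \ Zs i with hW_def
  have hWsub : W ⊆ B' \ B := fun x hx => hZsub j hx.1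
  have hWfin : W.Finite := hD.subset hWsub
  have hsubij : Zs i ⊆ Zs j := hmono i j (le_of_lt hij)
  have hunion : Zs i ∪ W = Zs j := Set.union_diff_cancel hsubij
  have hdisjW : Disjoint (Zs i) W := Set.disjoint_sdiff_right
  have hWcard : W.ncard = j - i := by
    rw [hW_def, Set.ncard_diff hsubij (hZfin i), hcard j hjn, hcard i (by omega)]
  have hWne : W.Nonempty := by
    rw [← Set.ncard_pos hWfin, hWcard]; omega
  -- split sums over Zs j
  have hsplit1 : ∑ᶠ z ∈ Zs j, ψ z = (∑ᶠ z ∈ Zs i, ψ z) + ∑ᶠ z ∈ W, ψ z := by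
    rw [← hunion]; exact finsum_mem_union hdisjW (hZfin i) hWfin
  have hsplit2 : ∑ᶠ z ∈ Zs j, ψ (φ z)
      = (∑ᶠ z ∈ Zs i, ψ (φ z)) + ∑ᶠ z ∈ W, ψ (φ z) := by
    rw [← hunion]; exact finsum_mem_union hdisjW (hZfin i) hWfin
  have hsi := hsum (Zs i) (hZsub i)
  have hsj := hsum (Zs j) (hZsub j)
  have hsW := hsum W hWsub
  -- from heq : sums of the two swapped bases agree
  have heq' : (∑ᶠ e ∈ (B' \ Zs i) ∪ φ '' Zs i, ψ e)
      = ∑ᶠ e ∈ (B' \ Zs j) ∪ φ '' Zs j, ψ e := heq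
  have hkey : ∑ᶠ z ∈ W, ψ (φ z) = ∑ᶠ z ∈ W, ψ z := by
    have e1 : (∑ᶠ e ∈ (B' \ Zs j) ∪ φ '' Zs j, ψ e) + (∑ᶠ z ∈ Zs i, ψ z)
        + ∑ᶠ z ∈ W, ψ z
        = (∑ᶠ e ∈ B', ψ e) + (∑ᶠ z ∈ Zs i, ψ (φ z)) + ∑ᶠ z ∈ W, ψ (φ z) := by
      have := hsj
      rw [hsplit1, hsplit2] at this
      calc (∑ᶠ e ∈ (B' \ Zs j) ∪ φ '' Zs j, ψ e) + (∑ᶠ z ∈ Zs i, ψ z)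
            + ∑ᶠ z ∈ W, ψ z
          = (∑ᶠ e ∈ (B' \ Zs j) ∪ φ '' Zs j, ψ e)
            + ((∑ᶠ z ∈ Zs i, ψ z) + ∑ᶠ z ∈ W, ψ z) := by abel
        _ = (∑ᶠ e ∈ B', ψ e) + ((∑ᶠ z ∈ Zs i, ψ (φ z)) + ∑ᶠ z ∈ W, ψ (φ z)) :=
            this
        _ = (∑ᶠ e ∈ B', ψ e) + (∑ᶠ z ∈ Zs i, ψ (φ z)) + ∑ᶠ z ∈ W, ψ (φ z) := by
            abel
    have e2 : (∑ᶠ e ∈ (B' \ Zs j) ∪ φ '' Zs j, ψ e) + (∑ᶠ z ∈ Zs i, ψ z)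
        = (∑ᶠ e ∈ B', ψ e) + ∑ᶠ z ∈ Zs i, ψ (φ z) := by
      rw [← heq']; exact hsi
    have := e1
    rw [e2] at this -- doesn't directly rewrite; fallback below
    exact (add_left_cancel this).symm
  -- now the basis swapped by W avoids F, contradiction with minimality
  have hsumW : ∑ᶠ e ∈ (B' \ W) ∪ φ '' W, ψ e = ∑ᶠ e ∈ B', ψ e := by
    have := hsW
    rw [hkey] at this
    exact add_right_cancel this
  have := hmem W hWsub hWne
  rw [hsumW] at this
  exact hψB' this
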